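/- Let K be a compact, perfectly normal topological space. A real-valued function f ∈ C(K) with ‖f‖ = 1 is a (ρ₊)-left symmetric point of C(K) if and only if M_f = {k₀} for some k₀ ∈ K and f(k) = 0 for all k ∈ K with k ≠ k₀. -/

import Mathlib

open Filter Topology Set Metric NormedSpace

noncomputable section

/-- Birkhoff–James orthogonality: `x ⊥_B y` iff `‖x + t • y‖ ≥ ‖x‖` for all real `t`. -/
def BJOrth {E : Type*} [NormedAddCommGroup E] [NormedSpace ℝ E] (x y : E) : Prop :=
  ∀ t : ℝ, ‖x‖ ≤ ‖x + t • y‖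

/-- The norm derivative `ρ'₊(x,y) = ‖x‖ · lim_{t→0⁺} (‖x+ty‖-‖x‖)/t`. -/
def rhoPlus {E : Type*} [NormedAddCommGroup E] [NormedSpace ℝ E] (x y : E) : ℝ :=
  ‖x‖ * limUnder (𝓝[>] (0 : ℝ)) (fun t => (‖x + t • y‖ - ‖x‖) / t)

/-- The norm derivative `ρ'₋(x,y) = ‖x‖ · lim_{t→0⁻} (‖x+ty‖-‖x‖)/t`. -/
def rhoMinus {E : Type*} [NormedAddCommGroup E] [NormedSpace ℝ E] (x y : E) : ℝ :=
  ‖x‖ * limUnder (𝓝[<] (0 : ℝ)) (fun t => (‖x + t • y‖ - ‖x‖) / t)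

/-- The norm derivative `ρ'(x,y) = (ρ'₊(x,y) + ρ'₋(x,y))/2`. -/
def rhoDer {E : Type*} [NormedAddCommGroup E] [NormedSpace ℝ E] (x y : E) : ℝ :=
  (rhoPlus x y + rhoMinus x y) / 2

/-- `x` is an exposed point of the closed unit ball of `E`: there is a norm-one functional `f`
with `f x = 1` and `f u < 1` for every `u` in the ball with `u ≠ x`. -/
def ExposedPt {E : Type*} [NormedAddCommGroup E] [NormedSpace ℝ E] (x : E) : Prop :=
  ‖x‖ ≤ 1 ∧ ∃ f : E →L[ℝ] ℝ, ‖f‖ = 1 ∧ f x = 1 ∧ ∀ u : E, ‖u‖ ≤ 1 → u ≠ x → f u < 1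



section helpers
variable {E : Type*} [NormedAddCommGroup E] [NormedSpace ℝ E]

lemma quot_mono (x y : E) :
    MonotoneOn (fun t : ℝ => (‖x + t • y‖ - ‖x‖) / t) (Ioi 0) := by
  rintro s (hs : (0:ℝ) < s) t (ht : (0:ℝ) < t) hst
  have key : t * ‖x + s • y‖ ≤ s * ‖x + t • y‖ + (t - s) * ‖x‖ := by
    have hsm : t • (x + s • y) = s • (x + t • y) + (t - s) • x := by
      module
    calc t * ‖x + s • y‖ = ‖t • (x + s • y)‖ := by
          rw [norm_smul, Real.norm_of_nonneg ht.le]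
      _ = ‖s • (x + t • y) + (t - s) • x‖ := by rw [hsm]
      _ ≤ ‖s • (x + t • y)‖ + ‖(t - s) • x‖ := norm_add_le _ _
      _ = s * ‖x + t • y‖ + (t - s) * ‖x‖ := by
          rw [norm_smul, norm_smul, Real.norm_of_nonneg hs.le,
            Real.norm_of_nonneg (by linarith)]
  rw [div_le_div_iff₀ hs ht]
  nlinarith
lemma quot_bdd (x y : E) : ∀ t ∈ Ioi (0:ℝ), -‖y‖ ≤ (‖x + t • y‖ - ‖x‖) / t := by
  rintro t (ht : (0:ℝ) < t)
  rw [le_div_iff₀ ht]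
  have h1 : ‖x‖ - ‖t • y‖ ≤ ‖x + t • y‖ := by
    have h2 := norm_add_le (x + t • y) (-(t • y))
    simp only [add_neg_cancel_right, norm_neg] at h2
    linarith
  rw [norm_smul, Real.norm_of_nonneg ht.le] at h1
  nlinarith

lemma exists_lim (x y : E) : ∃ L : ℝ,
    Tendsto (fun t : ℝ => (‖x + t • y‖ - ‖x‖) / t) (𝓝[>] 0) (𝓝 L) ∧
    rhoPlus x y = ‖x‖ * L ∧ ∀ t > (0:ℝ), L ≤ (‖x + t • y‖ - ‖x‖) / t := by
  set q : ℝ → ℝ := fun t => (‖x + t • y‖ - ‖x‖) / t with hq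
  have hbdd : BddBelow (q '' Ioi 0) := by
    refine ⟨-‖y‖, ?_⟩
    rintro r ⟨t, ht, rfl⟩
    exact quot_bdd x y t ht
  have htd := (quot_mono x y).tendsto_nhdsGT hbdd
  refine ⟨_, htd, ?_, ?_⟩
  · unfold rhoPlus
    rw [htd.limUnder_eq]
  · intro t ht
    refine le_of_tendsto htd ?_
    filter_upwards [Ioo_mem_nhdsGT_of_mem (by exact ⟨le_refl _, ht⟩ : (0:ℝ) ∈ Ico 0 t)]
      with s hs
    exact quot_mono x y hs.1 ht hs.2.le

lemma rhoPlus_eq_of_tendsto {x y : E} {L : ℝ}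
    (h : Tendsto (fun t : ℝ => (‖x + t • y‖ - ‖x‖) / t) (𝓝[>] 0) (𝓝 L)) :
    rhoPlus x y = ‖x‖ * L := by
  unfold rhoPlus; rw [h.limUnder_eq]
end helpers

section CK
variable {K : Type*} [TopologicalSpace K] [CompactSpace K]

lemma norm_attained [Nonempty K] (g : C(K, ℝ)) : ∃ k, |g k| = ‖g‖ := by
  obtain ⟨k, -, hk⟩ := isCompact_univ.exists_isMaxOn univ_nonempty
    (continuous_abs.comp g.continuous).continuousOn
  refine ⟨k, le_antisymm ?_ ?_⟩
  · rw [← Real.norm_eq_abs]; exact g.norm_coe_le_norm k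
  · exact (g.norm_le (abs_nonneg _)).2 fun x => by
      rw [Real.norm_eq_abs]; exact hk (mem_univ x)

lemma norm_le_of_forall {g : C(K, ℝ)} {C : ℝ} (hC : 0 ≤ C) (h : ∀ k, |g k| ≤ C) :
    ‖g‖ ≤ C :=
  (g.norm_le hC).2 fun x => by rw [Real.norm_eq_abs]; exact h x

lemma apply_le_norm (g : C(K, ℝ)) (k : K) : |g k| ≤ ‖g‖ := by
  rw [← Real.norm_eq_abs]; exact g.norm_coe_le_norm k
end CK

section back
variable {K : Type*} [TopologicalSpace K] [CompactSpace K]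

lemma backward_dir (f : C(K, ℝ)) (hf : ‖f‖ = 1) (k₀ : K)
    (hM : {k : K | |f k| = ‖f‖} = {k₀}) (hz : ∀ k : K, k ≠ k₀ → f k = 0)
    (g : C(K, ℝ)) (hg : rhoPlus f g = 0) : rhoPlus g f = 0 := by
  have hk₀ : |f k₀| = 1 := by
    have : k₀ ∈ {k : K | |f k| = ‖f‖} := hM ▸ rfl
    rwa [hf] at this
  set c := f k₀ with hc
  have hc2 : c * c = 1 := by
    have := sq_abs c
    rw [hk₀] at this
    nlinarith [this]
  have hcne : c ≠ 0 := fun h => by rw [h] at hk₀; simp at hk₀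
  have hgk : |g k₀| ≤ ‖g‖ := apply_le_norm g k₀
  -- Step 1: rhoPlus f g = c * g k₀
  have hgk0 : g k₀ = 0 := by
    set t₁ : ℝ := 1 / (2 * (‖g‖ + 1)) with ht₁
    have hgpos : (0:ℝ) < ‖g‖ + 1 := by positivity
    have ht₁pos : 0 < t₁ := by positivity
    have hqf : (fun t : ℝ => (‖f + t • g‖ - ‖f‖) / t) =ᶠ[𝓝[>] (0:ℝ)]
        (fun _ => c * g k₀) := by
      filter_upwards [Ioo_mem_nhdsGT_of_mem (⟨le_refl _, ht₁pos⟩ : (0:ℝ) ∈ Ico 0 t₁)]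
        with t ht
      obtain ⟨htpos, htlt⟩ := ht
      have htg : t * ‖g‖ < 1 / 2 := by
        have h' : t * (2 * (‖g‖ + 1)) < 1 := (lt_div_iff₀ (by positivity)).1 htlt
        nlinarith [norm_nonneg g]
      have habs : |c + t * g k₀| = 1 + t * (c * g k₀) := by
        have h1 : c + t * g k₀ = c * (1 + t * (c * g k₀)) := by
          linear_combination (-(t * g k₀)) * hc2
        have h4 : |t * (c * g k₀)| ≤ t * ‖g‖ := by
          rw [abs_mul, abs_mul, hk₀, one_mul, abs_of_nonneg htpos.le]
          exact mul_le_mul_of_nonneg_left hgk htpos.le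
        rw [h1, abs_mul, hk₀, one_mul, abs_of_nonneg]
        linarith [neg_abs_le (t * (c * g k₀))]
      have hnorm : ‖f + t • g‖ = |c + t * g k₀| := by
        refine le_antisymm ?_ ?_
        · refine norm_le_of_forall (abs_nonneg _) fun k => ?_
          by_cases hk : k = k₀
          · subst hk
            simp [ContinuousMap.add_apply, ContinuousMap.smul_apply, smul_eq_mul, hc]
          · have hfk : f k = 0 := hz k hk
            have h2 : |t * g k₀| ≤ t * ‖g‖ := by
              rw [abs_mul, abs_of_nonneg htpos.le]
              exact mul_le_mul_of_nonneg_left hgk htpos.le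
            have h3 : 1 - t * ‖g‖ ≤ |c + t * g k₀| := by
              have := abs_add_le (c + t * g k₀) (-(t * g k₀))
              simp only [add_neg_cancel_right, abs_neg] at this
              rw [hk₀] at this
              linarith [h2, this]
            simp only [ContinuousMap.add_apply, ContinuousMap.smul_apply, smul_eq_mul, hfk,
              zero_add, abs_mul, abs_of_nonneg htpos.le]
            calc t * |g k| ≤ t * ‖g‖ := mul_le_mul_of_nonneg_left (apply_le_norm g k) htpos.le
              _ ≤ |c + t * g k₀| := by linarith
        · have := apply_le_norm (f + t • g) k₀
          simpa [ContinuousMap.add_apply, ContinuousMap.smul_apply, smul_eq_mul, hc] using this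
      rw [hnorm, habs, hf, add_sub_cancel_left]
      exact mul_div_cancel_left₀ _ htpos.ne'
    have htd : Tendsto (fun t : ℝ => (‖f + t • g‖ - ‖f‖) / t) (𝓝[>] 0) (𝓝 (c * g k₀)) :=
      Tendsto.congr' hqf.symm tendsto_const_nhds
    have := rhoPlus_eq_of_tendsto htd
    rw [hf, one_mul] at this
    rw [this] at hg
    exact (mul_eq_zero.1 hg).resolve_left hcne
  -- Step 2: rhoPlus g f = 0
  by_cases hg0 : g = 0
  · simp [rhoPlus, hg0]
  · have hgnorm : 0 < ‖g‖ := norm_pos_iff.2 hg0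
    have : Nonempty K := ⟨k₀⟩
    obtain ⟨k₁, hk₁⟩ := norm_attained g
    have hk₁ne : k₁ ≠ k₀ := fun h => by
      rw [h, hgk0] at hk₁; simp [← hk₁] at hgnorm
    have hqf : (fun t : ℝ => (‖g + t • f‖ - ‖g‖) / t) =ᶠ[𝓝[>] (0:ℝ)]
        (fun _ => (0:ℝ)) := by
      filter_upwards [Ioo_mem_nhdsGT_of_mem (⟨le_refl _, hgnorm⟩ : (0:ℝ) ∈ Ico 0 ‖g‖)]
        with t ht
      obtain ⟨htpos, htlt⟩ := ht
      have hnorm : ‖g + t • f‖ = ‖g‖ := by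
        refine le_antisymm ?_ ?_
        · refine norm_le_of_forall (norm_nonneg g) fun k => ?_
          by_cases hk : k = k₀
          · subst hk
            simp only [ContinuousMap.add_apply, ContinuousMap.smul_apply, smul_eq_mul, hgk0,
              zero_add, abs_mul]
            rw [← hc, hk₀, mul_one, abs_of_nonneg htpos.le]
            exact htlt.le
          · simp only [ContinuousMap.add_apply, ContinuousMap.smul_apply, smul_eq_mul,
              hz k hk, mul_zero, add_zero]
            exact apply_le_norm g k
        · have := apply_le_norm (g + t • f) k₁
          simpa [ContinuousMap.add_apply, ContinuousMap.smul_apply, smul_eq_mul,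
            hz k₁ hk₁ne, hk₁] using this
      rw [hnorm]
      simp
    have htd : Tendsto (fun t : ℝ => (‖g + t • f‖ - ‖g‖) / t) (𝓝[>] 0) (𝓝 0) :=
      Tendsto.congr' hqf.symm tendsto_const_nhds
    rw [rhoPlus_eq_of_tendsto htd, mul_zero]
end back

section fwd
variable {K : Type*} [TopologicalSpace K] [CompactSpace K] [T2Space K]

lemma stepA (f : C(K, ℝ)) (hf : ‖f‖ = 1)
    (hsym : ∀ g : C(K, ℝ), rhoPlus f g = 0 → rhoPlus g f = 0)
    (k₀ : K) (hk₀ : |f k₀| = ‖f‖)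
    (k₁ : K) (hk₁ : |f k₁| ≠ ‖f‖) : f k₁ = 0 := by
  by_contra hne
  have hfk₁pos : 0 < |f k₁| := abs_pos.2 hne
  have hlt : |f k₁| < 1 := lt_of_le_of_ne (hf ▸ apply_le_norm f k₁) (hf ▸ hk₁)
  have hMc : IsClosed {k : K | |f k| = ‖f‖} :=
    isClosed_eq (continuous_abs.comp f.continuous) continuous_const
  obtain ⟨h, h0, h1, h01⟩ := exists_continuous_zero_one_of_isClosed hMc
    (isClosed_singleton (x := k₁)) (Set.disjoint_singleton_right.2 hk₁)
  set s : ℝ := if 0 < f k₁ then 1 else -1 with hs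
  have hs1 : |s| = 1 := by rw [hs]; split <;> simp
  have hs2 : s * s = 1 := by rw [hs]; split <;> norm_num
  have hsf : s * f k₁ = |f k₁| := by
    rw [hs]; split
    · rw [one_mul, abs_of_pos ‹_›]
    · rw [abs_of_neg (lt_of_le_of_ne (not_lt.1 ‹_›) hne)]; ring
  set g : C(K, ℝ) := s • h with hg
  have hgapp : ∀ k, g k = s * h k := fun k => by
    simp [hg, ContinuousMap.smul_apply, smul_eq_mul]
  have hh1 : h k₁ = 1 := by
    have := h1 (rfl : k₁ ∈ ({k₁} : Set K)); simpa using this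
  have hgk₁ : g k₁ = s := by rw [hgapp, hh1, mul_one]
  have hgM : ∀ k, |f k| = ‖f‖ → g k = 0 := fun k hk => by
    have := h0 hk
    simp only [Pi.zero_apply] at this
    rw [hgapp, this, mul_zero]
  have hgnorm : ‖g‖ = 1 := by
    refine le_antisymm (norm_le_of_forall zero_le_one fun k => ?_) ?_
    · rw [hgapp, abs_mul, hs1, one_mul]
      exact abs_le.2 ⟨by linarith [(h01 k).1], (h01 k).2⟩
    · have := apply_le_norm g k₁
      rwa [hgk₁, hs1] at this
  -- rhoPlus f g = 0
  have hrfg : rhoPlus f g = 0 := by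
    have hlow : ∀ t : ℝ, 0 < t → 0 ≤ (‖f + t • g‖ - ‖f‖) / t := by
      intro t ht
      have h1' : ‖f‖ ≤ ‖f + t • g‖ := by
        have h2 := apply_le_norm (f + t • g) k₀
        rw [ContinuousMap.add_apply, ContinuousMap.smul_apply, smul_eq_mul,
          hgM k₀ hk₀, mul_zero, add_zero, hk₀] at h2
        exact h2
      exact div_nonneg (by linarith) ht.le
    have htd : Tendsto (fun t : ℝ => (‖f + t • g‖ - ‖f‖) / t) (𝓝[>] 0) (𝓝 0) := by
      rw [tendsto_order]
      constructor
      · intro a ha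
        filter_upwards [self_mem_nhdsWithin] with t ht
        exact lt_of_lt_of_le ha (hlow t ht)
      · intro a ha
        set V : Set K := {k | |g k| < a / 2} with hV
        have hVopen : IsOpen V := isOpen_lt (continuous_abs.comp g.continuous) continuous_const
        obtain ⟨m, hm0, hm1, hm⟩ : ∃ m : ℝ, 0 ≤ m ∧ m < 1 ∧ ∀ k ∈ Vᶜ, |f k| ≤ m := by
          rcases eq_empty_or_nonempty (Vᶜ) with hemp | hne'
          · exact ⟨0, le_rfl, one_pos, fun k hk => by rw [hemp] at hk; exact hk.elim⟩
          · obtain ⟨k₂, hk₂, hmax⟩ := (hVopen.isClosed_compl.isCompact).exists_isMaxOn hne'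
              (continuous_abs.comp f.continuous).continuousOn
            refine ⟨|f k₂|, abs_nonneg _, ?_, fun k hk => hmax hk⟩
            have hgk₂ : g k₂ ≠ 0 := by
              intro hzero
              have : ¬ |g k₂| < a / 2 := hk₂
              rw [hzero] at this
              simp at this
              linarith
            have : |f k₂| ≠ ‖f‖ := fun hmem => hgk₂ (hgM k₂ hmem)
            exact lt_of_le_of_ne (hf ▸ apply_le_norm f k₂) (hf ▸ this)
        have ht₀pos : 0 < (1 - m) / (‖g‖ + 1) := div_pos (by linarith) (by positivity)
        filter_upwards [Ioo_mem_nhdsGT_of_mem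
          (⟨le_refl _, ht₀pos⟩ : (0:ℝ) ∈ Ico 0 ((1 - m) / (‖g‖ + 1)))] with t ht
        obtain ⟨htpos, htlt⟩ := ht
        have htlt' : t * (‖g‖ + 1) < 1 - m := (lt_div_iff₀ (by positivity)).1 htlt
        have hup : ‖f + t • g‖ ≤ 1 + t * (a / 2) := by
          refine norm_le_of_forall (by nlinarith) fun k => ?_
          have habs : |f k + t * g k| ≤ |f k| + t * |g k| := by
            have h5 := abs_add_le (f k) (t * g k)
            rwa [abs_mul, abs_of_nonneg htpos.le] at h5
          have happ : (f + t • g) k = f k + t * g k := by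
            simp [ContinuousMap.add_apply, ContinuousMap.smul_apply, smul_eq_mul]
          rw [happ]
          by_cases hk : k ∈ V
          · have h6 := apply_le_norm f k
            rw [hf] at h6
            have hgk' : |g k| < a / 2 := hk
            nlinarith
          · have h6 := apply_le_norm g k
            have h7 := hm k hk
            nlinarith
        have hq : (‖f + t • g‖ - ‖f‖) / t ≤ a / 2 := by
          rw [hf, div_le_iff₀ htpos]
          nlinarith
        linarith
    rw [rhoPlus_eq_of_tendsto htd, mul_zero]
  -- use symmetry
  have hgf := hsym g hrfg
  obtain ⟨L, htd2, heq, -⟩ := exists_lim g f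
  have hLlb : |f k₁| ≤ L := by
    refine ge_of_tendsto htd2 ?_
    filter_upwards [self_mem_nhdsWithin] with t (ht : 0 < t)
    have h2 := apply_le_norm (g + t • f) k₁
    simp only [ContinuousMap.add_apply, ContinuousMap.smul_apply, smul_eq_mul, hh1,
      mul_one] at h2
    rw [hgk₁] at h2
    have h3 : s + t * f k₁ = s * (1 + t * (s * f k₁)) := by
      linear_combination (-(t * f k₁)) * hs2
    rw [h3, abs_mul, hs1, one_mul, hsf,
      abs_of_nonneg (by positivity : (0:ℝ) ≤ 1 + t * |f k₁|)] at h2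
    rw [hgnorm, le_div_iff₀ ht]
    nlinarith
  rw [heq, hgnorm, one_mul] at hgf
  linarith


lemma stepB (f : C(K, ℝ)) (hf : ‖f‖ = 1)
    (hsym : ∀ g : C(K, ℝ), rhoPlus f g = 0 → rhoPlus g f = 0)
    (k₀ : K) (hk₀ : |f k₀| = ‖f‖)
    (k₁ : K) (hk₁ : |f k₁| = ‖f‖) : k₁ = k₀ := by
  by_contra hne
  obtain ⟨h, h0, h1, h01⟩ := exists_continuous_zero_one_of_isClosed
    (isClosed_singleton (x := k₁)) (isClosed_singleton (x := k₀))
    (Set.disjoint_singleton.2 hne)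
  have hh0 : h k₁ = 0 := by have := h0 (rfl : k₁ ∈ ({k₁} : Set K)); simpa using this
  have hh1 : h k₀ = 1 := by have := h1 (rfl : k₀ ∈ ({k₀} : Set K)); simpa using this
  have hfk₀ : |f k₀| = 1 := hk₀.trans hf
  have hfk₁ : |f k₁| = 1 := hk₁.trans hf
  set g : C(K, ℝ) := -(f * h) with hg
  have hgapp : ∀ k, g k = -(f k * h k) := fun k => by
    simp [hg]
  have habsh : ∀ k, |h k| ≤ 1 := fun k =>
    abs_le.2 ⟨by linarith [(h01 k).1], (h01 k).2⟩
  have hgnorm : ‖g‖ = 1 := by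
    refine le_antisymm (norm_le_of_forall zero_le_one fun k => ?_) ?_
    · rw [hgapp, abs_neg, abs_mul]
      have h6 := apply_le_norm f k; rw [hf] at h6
      nlinarith [abs_nonneg (f k), abs_nonneg (h k), habsh k]
    · have := apply_le_norm g k₀
      rwa [hgapp, hh1, mul_one, abs_neg, hfk₀] at this
  have hrfg : rhoPlus f g = 0 := by
    have hqf : (fun t : ℝ => (‖f + t • g‖ - ‖f‖) / t) =ᶠ[𝓝[>] (0:ℝ)]
        (fun _ => (0:ℝ)) := by
      filter_upwards [Ioo_mem_nhdsGT_of_mem (⟨le_refl _, one_pos⟩ : (0:ℝ) ∈ Ico 0 1)]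
        with t ht
      obtain ⟨htpos, htlt⟩ := ht
      have hnorm : ‖f + t • g‖ = 1 := by
        refine le_antisymm (norm_le_of_forall zero_le_one fun k => ?_) ?_
        · have happ : (f + t • g) k = f k * (1 - t * h k) := by
            simp only [ContinuousMap.add_apply, ContinuousMap.smul_apply, smul_eq_mul, hgapp]
            ring
          rw [happ, abs_mul]
          have h6 := apply_le_norm f k; rw [hf] at h6
          have h7 := h01 k
          have habs : |1 - t * h k| ≤ 1 := by
            rw [abs_le]; constructor <;> nlinarith [h7.1, h7.2]
          nlinarith [abs_nonneg (f k)]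
        · have h8 := apply_le_norm (f + t • g) k₁
          have happ : (f + t • g) k₁ = f k₁ * (1 - t * h k₁) := by
            simp only [ContinuousMap.add_apply, ContinuousMap.smul_apply, smul_eq_mul, hgapp]
            ring
          rwa [happ, hh0, mul_zero, sub_zero, mul_one, hfk₁] at h8
      rw [hnorm, hf, sub_self, zero_div]
    have htd : Tendsto (fun t : ℝ => (‖f + t • g‖ - ‖f‖) / t) (𝓝[>] (0:ℝ)) (𝓝 (0:ℝ)) :=
      Tendsto.congr' hqf.symm tendsto_const_nhds
    rw [rhoPlus_eq_of_tendsto htd, mul_zero]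
  have hgf := hsym g hrfg
  obtain ⟨L, htd2, heq, hle⟩ := exists_lim g f
  have hL : L ≤ -1 := by
    have h9 := hle (1/2) (by norm_num)
    have hn : ‖g + (1/2 : ℝ) • f‖ ≤ 1/2 := by
      refine norm_le_of_forall (by norm_num) fun k => ?_
      have happ : (g + (1/2 : ℝ) • f) k = f k * (1/2 - h k) := by
        simp only [ContinuousMap.add_apply, ContinuousMap.smul_apply, smul_eq_mul, hgapp]
        ring
      rw [happ, abs_mul]
      have h6 := apply_le_norm f k; rw [hf] at h6
      have h7 := h01 k
      have habs : |1/2 - h k| ≤ 1/2 := by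
        rw [abs_le]; constructor <;> linarith [h7.1, h7.2]
      nlinarith [abs_nonneg (f k)]
    rw [hgnorm] at h9
    calc L ≤ (‖g + (1/2:ℝ) • f‖ - 1) / (1/2) := h9
      _ ≤ (1/2 - 1) / (1/2) := (div_le_div_iff_of_pos_right (by norm_num)).2 (by linarith)
      _ = -1 := by norm_num
  rw [heq, hgnorm, one_mul] at hgf
  linarith

end fwd

theorem stmt12 {K : Type*} [TopologicalSpace K] [CompactSpace K] [T2Space K]
    [PerfectlyNormalSpace K]
    (f : C(K, ℝ)) (hf : ‖f‖ = 1) :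
    (∀ g : C(K, ℝ), rhoPlus f g = 0 → rhoPlus g f = 0) ↔
      (∃ k₀ : K, {k : K | |f k| = ‖f‖} = {k₀} ∧ ∀ k : K, k ≠ k₀ → f k = 0) := by
  constructor
  · intro hsym
    have hne : Nonempty K := by
      rcases isEmpty_or_nonempty K with he | hne
      · exfalso
        have h0 : ‖f‖ ≤ 0 := norm_le_of_forall le_rfl fun k => (IsEmpty.false k).elim
        rw [hf] at h0; linarith
      · exact hne
    obtain ⟨k₀, hk₀⟩ := norm_attained f
    refine ⟨k₀, ?_, ?_⟩
    · ext k
      simp only [mem_setOf_eq, mem_singleton_iff]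
      exact ⟨fun hk => stepB f hf hsym k₀ hk₀ k hk, fun hk => hk ▸ hk₀⟩
    · intro k hk
      by_cases hkM : |f k| = ‖f‖
      · exact absurd (stepB f hf hsym k₀ hk₀ k hkM) hk
      · exact stepA f hf hsym k₀ hk₀ k hkM
  · rintro ⟨k₀, hM, hz⟩ g hg
    exact backward_dir f hf k₀ hM hz g hg
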